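/- Let G = (V,E) be a finite connected edge-weighted graph and let F be its laminar family. Then every set S ∈ F induces a connected subgraph in every minimum spanning tree of G; that is, for every MST M of G and every S ∈ F, the subgraph of M induced by the vertex set S is connected. -/

import Mathlib

open SimpleGraph

/-- The threshold subgraph `G_{≤ t}`: same vertices, only edges of weight `≤ t`. -/
def thresholdGraph {V : Type*} (G : SimpleGraph V) (w : Sym2 V → ℝ) (t : ℝ) :
    SimpleGraph V where
  Adj u v := G.Adj u v ∧ w s(u, v) ≤ t
  symm := by
    constructor
    intro u v hv
    exact ⟨hv.1.symm, by rw [Sym2.eq_swap]; exact hv.2⟩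
  loopless := ⟨fun _ hv => G.irrefl hv.1⟩

/-- The strict threshold subgraph `G_{< t}`. -/
def strictThresholdGraph {V : Type*} (G : SimpleGraph V) (w : Sym2 V → ℝ) (t : ℝ) :
    SimpleGraph V where
  Adj u v := G.Adj u v ∧ w s(u, v) < t
  symm := by
    constructor
    intro u v hv
    exact ⟨hv.1.symm, by rw [Sym2.eq_swap]; exact hv.2⟩
  loopless := ⟨fun _ hv => G.irrefl hv.1⟩

/-- The laminar family of an edge-weighted graph: the whole vertex set together with the
vertex sets of the connected components of every threshold subgraph. -/
def laminarFamily {V : Type*} (G : SimpleGraph V) (w : Sym2 V → ℝ) : Set (Set V) :=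
  insert Set.univ
    {S | ∃ (t : ℝ) (C : (thresholdGraph G w t).ConnectedComponent), S = C.supp}

/-- `M` is a spanning tree of `G`. -/
def IsSpanningTree {V : Type*} (G M : SimpleGraph V) : Prop :=
  M ≤ G ∧ M.IsTree

/-- Total weight of (the edges of) a graph. -/
noncomputable def totalWeight {V : Type*} [Finite V] (M : SimpleGraph V)
    (w : Sym2 V → ℝ) : ℝ :=
  ∑ e ∈ M.edgeSet.toFinite.toFinset, w e

/-- `M` is a minimum spanning tree of `G` with respect to the weights `w`. -/
def IsMST {V : Type*} [Finite V] (G : SimpleGraph V) (w : Sym2 V → ℝ)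
    (M : SimpleGraph V) : Prop :=
  IsSpanningTree G M ∧ ∀ M' : SimpleGraph V, IsSpanningTree G M' →
    totalWeight M w ≤ totalWeight M' w

/-- A phylogenetic tree: a finite tree with strictly positive edge lengths and a nonempty
set `L` of labeled vertices, each hidden vertex having degree at least 3. -/
structure PhyloTree (V : Type*) where
  finV : Finite V
  T : SimpleGraph V
  isTree : T.IsTree
  len : Sym2 V → ℝ
  len_pos : ∀ e ∈ T.edgeSet, 0 < len e
  L : Set V
  L_nonempty : L.Nonempty
  hidden_deg : ∀ v, v ∉ L → 3 ≤ (T.neighborSet v).ncard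

namespace PhyloTree

variable {V : Type*}

/-- The unique path between two vertices of the tree. -/
noncomputable def path (P : PhyloTree V) (u v : V) : P.T.Walk u v :=
  (P.isTree.existsUnique_path u v).exists.choose

lemma path_isPath (P : PhyloTree V) (u v : V) : (P.path u v).IsPath :=
  (P.isTree.existsUnique_path u v).exists.choose_spec

/-- The tree distance: the sum of the edge lengths along the unique path. -/
noncomputable def dist (P : PhyloTree V) (u v : V) : ℝ :=
  ((P.path u v).edges.map P.len).sum

lemma dist_comm (P : PhyloTree V) (u v : V) : P.dist u v = P.dist v u := by
  have h : (P.path u v).reverse = P.path v u :=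
    (P.isTree.existsUnique_path v u).unique ((P.path_isPath u v).reverse)
      (P.path_isPath v u)
  unfold dist
  rw [← h, SimpleGraph.Walk.edges_reverse, List.map_reverse, List.sum_reverse]

/-- The tree distance as a symmetric function on unordered pairs. -/
noncomputable def wdist (P : PhyloTree V) : Sym2 V → ℝ :=
  Sym2.lift ⟨fun u v => P.dist u v, fun u v => P.dist_comm u v⟩

/-- The surrogate set of a vertex: the labeled vertices closest to it. -/
def Sg (P : PhyloTree V) (h : V) : Set V :=
  {l | l ∈ P.L ∧ ∀ l' ∈ P.L, P.dist l h ≤ P.dist l' h}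

/-- `s` is the surrogate vertex `Sg_R(h)` of `h` w.r.t. the ranking `R`:
the element of the surrogate set of `h` of smallest `R`-value. -/
def IsSgR (P : PhyloTree V) (R : V → ℕ) (h : V) (s : V) : Prop :=
  s ∈ P.Sg h ∧ ∀ l ∈ P.Sg h, R s ≤ R l

/-- The edge weights of the distance graph of `P` (the complete graph on `↥P.L`). -/
noncomputable def wG (P : PhyloTree V) : Sym2 ↥P.L → ℝ :=
  fun e => P.wdist (e.map Subtype.val)

/-- An edge `e` of the distance graph lying in at least one MST (i.e. an edge of `g`). -/
def mstEdge (P : PhyloTree V) (e : Sym2 ↥P.L) : Prop :=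
  haveI := P.finV
  ∃ M : SimpleGraph ↥P.L, IsMST (⊤ : SimpleGraph ↥P.L) P.wG M ∧ e ∈ M.edgeSet

/-- `δ_max(v)`: the maximum degree of `v` over all MSTs of the distance graph. -/
noncomputable def deltaMax (P : PhyloTree V) (v : ↥P.L) : ℕ :=
  haveI := P.finV
  sSup {d : ℕ | ∃ M : SimpleGraph ↥P.L,
    IsMST (⊤ : SimpleGraph ↥P.L) P.wG M ∧ d = (M.neighborSet v).ncard}

end PhyloTree

/-- The smaller of the two ranks of the endpoints of an edge. -/
def sym2MinR {α : Type*} (R : α → ℕ) : Sym2 α → ℕ :=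
  Sym2.lift ⟨fun a b => min (R a) (R b), fun a b => min_comm _ _⟩

/-- The larger of the two ranks of the endpoints of an edge. -/
def sym2MaxR {α : Type*} (R : α → ℕ) : Sym2 α → ℕ :=
  Sym2.lift ⟨fun a b => max (R a) (R b), fun a b => max_comm _ _⟩

/-- The strict total order `<_R` on edges: first by weight, then by the smaller rank of
the endpoints, then by the larger rank of the endpoints. -/
def edgeLT {α : Type*} (w : Sym2 α → ℝ) (R : α → ℕ) (e f : Sym2 α) : Prop :=
  w e < w f ∨ (w e = w f ∧ (sym2MinR R e < sym2MinR R f ∨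
    (sym2MinR R e = sym2MinR R f ∧ sym2MaxR R e < sym2MaxR R f)))

/-- `M` is the vertex-ranked MST of `G` w.r.t. the ranking `R`: a spanning tree such that
every non-tree edge `{u,v}` of `G` is the `<_R`-greatest edge of the cycle it closes,
i.e. every edge of the `M`-path from `u` to `v` is `<_R`-smaller than `{u,v}`. -/
def IsVRMST {α : Type*} (G : SimpleGraph α) (w : Sym2 α → ℝ) (R : α → ℕ)
    (M : SimpleGraph α) : Prop :=
  IsSpanningTree G M ∧ ∀ u v : α, G.Adj u v → ¬M.Adj u v →
    ∀ p : M.Walk u v, p.IsPath → ∀ f ∈ p.edges, edgeLT w R f s(u, v)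

section AuxMST

open SimpleGraph Walk

/-- Splitting a walk with nodup edges at an edge `s(a,b)` occurring in it:
both "sides" survive deletion of the edge. -/
private lemma split_at_edge' {V : Type*} {G : SimpleGraph V} {a b : V} :
    ∀ {u v : V} (p : G.Walk u v), p.edges.Nodup → s(a, b) ∈ p.edges →
      ((G.deleteEdges {s(a, b)}).Reachable u a ∧ (G.deleteEdges {s(a, b)}).Reachable b v) ∨
      ((G.deleteEdges {s(a, b)}).Reachable u b ∧ (G.deleteEdges {s(a, b)}).Reachable a v) := by
  intro u v p
  induction p with
  | nil => intro _ hf; simp at hf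
  | @cons u c v h q ih =>
    intro hnd hf
    rw [Walk.edges_cons, List.nodup_cons] at hnd
    rw [Walk.edges_cons] at hf
    rcases List.mem_cons.mp hf with heq | hmem
    · have hq' : ∀ e ∈ q.edges, e ∉ ({s(a, b)} : Set (Sym2 V)) := by
        intro e he
        simp only [Set.mem_singleton_iff]
        rintro rfl
        exact hnd.1 (heq ▸ he)
      have hq : (G.deleteEdges {s(a, b)}).Reachable c v :=
        ⟨q.toDeleteEdges _ hq'⟩
      rcases Sym2.eq_iff.mp heq.symm with ⟨rfl, rfl⟩ | ⟨rfl, rfl⟩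
      · exact Or.inl ⟨Reachable.refl _, hq⟩
      · exact Or.inr ⟨Reachable.refl _, hq⟩
    · have hne : s(u, c) ∉ ({s(a, b)} : Set (Sym2 V)) := by
        simp only [Set.mem_singleton_iff]
        intro hh
        exact hnd.1 (by rw [hh]; exact hmem)
      have hadj : (G.deleteEdges {s(a, b)}).Adj u c := by
        rw [deleteEdges_adj]
        exact ⟨h, hne⟩
      rcases ih hnd.2 hmem with ⟨h1, h2⟩ | ⟨h1, h2⟩
      · exact Or.inl ⟨hadj.reachable.trans h1, h2⟩
      · exact Or.inr ⟨hadj.reachable.trans h1, h2⟩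

/-- The exchange/cycle property of MSTs: every edge on the tree path between the
endpoints of a graph edge weighs no more than that edge. -/
private lemma mst_path_edge_le {V : Type*} [Finite V] {G : SimpleGraph V}
    {w : Sym2 V → ℝ} {M : SimpleGraph V} (hM : IsMST G w M) {u v : V}
    (huv : G.Adj u v) (p : M.Walk u v) (hp : p.IsPath) {a b : V}
    (hfp : s(a, b) ∈ p.edges) : w s(a, b) ≤ w s(u, v) := by
  classical
  by_cases hef : s(a, b) = s(u, v)
  · rw [hef]
  obtain ⟨⟨hle, htree⟩, hmin⟩ := hM
  have hMne : ¬ M.Adj u v := by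
    intro hadj
    have hpath1 : (Walk.cons hadj Walk.nil).IsPath := by
      simp [Walk.isPath_def, huv.ne]
    have := (htree.existsUnique_path u v).unique hp hpath1
    rw [this] at hfp
    simp only [Walk.edges_cons, Walk.edges_nil, List.mem_singleton] at hfp
    exact hef hfp
  have habM : M.Adj a b := p.adj_of_mem_edges hfp
  have heM : s(u, v) ∉ M.edgeSet := hMne
  have hfM : s(a, b) ∈ M.edgeSet := habM
  set M' : SimpleGraph V := (M.deleteEdges {s(a, b)}) ⊔ fromEdgeSet {s(u, v)} with hM'def
  have hES : M'.edgeSet = (M.edgeSet \ {s(a, b)}) ∪ {s(u, v)} := by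
    rw [hM'def, edgeSet_sup, edgeSet_deleteEdges, edgeSet_fromEdgeSet]
    congr 1
    ext z
    simp only [Set.mem_diff, Set.mem_singleton_iff, Set.mem_setOf_eq, and_iff_left_iff_imp]
    rintro rfl
    simp [huv.ne]
  have hle' : M' ≤ G := by
    rw [← edgeSet_subset_edgeSet, hES]
    rintro z (⟨hz, -⟩ | hz)
    · exact edgeSet_mono hle hz
    · rw [Set.mem_singleton_iff] at hz
      rw [hz]
      exact huv
  have hdel_le : M.deleteEdges {s(a, b)} ≤ M' := le_sup_left
  have huv' : M'.Adj u v := by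
    rw [← SimpleGraph.mem_edgeSet, hES]
    exact Or.inr rfl
  have hsplitp := split_at_edge' p hp.edges_nodup hfp
  have hRab : M'.Reachable a b := by
    rcases hsplitp with ⟨h1, h2⟩ | ⟨h1, h2⟩
    · exact ((h1.mono hdel_le).symm.trans huv'.reachable).trans (h2.mono hdel_le).symm
    · exact (((h1.mono hdel_le).symm.trans huv'.reachable).trans (h2.mono hdel_le).symm).symm
  have hconn : M'.Connected := by
    have hnev : Nonempty V := htree.isConnected.nonempty
    have hreachu : ∀ x : V, M'.Reachable x u := by
      intro x
      obtain ⟨q0⟩ := htree.isConnected.preconnected x u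
      set q : M.Path x u := q0.toPath with hq
      by_cases hfq : s(a, b) ∈ q.val.edges
      · rcases split_at_edge' q.val q.prop.edges_nodup hfq with ⟨h1, h2⟩ | ⟨h1, h2⟩
        · exact ((h1.mono hdel_le).trans hRab).trans (h2.mono hdel_le)
        · exact ((h1.mono hdel_le).trans hRab.symm).trans (h2.mono hdel_le)
      · have hq' : ∀ e ∈ q.val.edges, e ∉ ({s(a, b)} : Set (Sym2 V)) := by
          intro e he
          simp only [Set.mem_singleton_iff]
          rintro rfl
          exact hfq he
        exact (Reachable.mono hdel_le ⟨q.val.toDeleteEdges _ hq'⟩)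
    exact (connected_iff _).mpr ⟨fun x y => (hreachu x).trans (hreachu y).symm, hnev⟩
  have hacy : M'.IsAcyclic := by
    intro x c hc
    by_cases hec : s(u, v) ∈ c.edges
    · have hkey := adj_and_reachable_delete_edges_iff_exists_cycle.mpr ⟨x, c, hc, hec⟩
      have hsub : M' \ fromEdgeSet {s(u, v)} ≤ M.deleteEdges {s(a, b)} := by
        rw [← edgeSet_subset_edgeSet, edgeSet_sdiff, hES, edgeSet_fromEdgeSet,
          edgeSet_deleteEdges]
        intro z hz
        rcases hz with ⟨hz1 | hz1, hz2⟩
        · exact hz1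
        · exfalso
          rw [Set.mem_singleton_iff] at hz1
          apply hz2
          refine ⟨hz1, ?_⟩
          rw [hz1]
          simp [huv.ne]
      have hRuv : (M.deleteEdges {s(a, b)}).Reachable u v := hkey.2.mono hsub
      have hbridge : M.IsBridge s(a, b) :=
        isAcyclic_iff_forall_adj_isBridge.mp htree.IsAcyclic habM
      rw [isBridge_iff] at hbridge
      apply hbridge
      show (M.deleteEdges {s(a, b)}).Reachable a b
      rcases hsplitp with ⟨h1, h2⟩ | ⟨h1, h2⟩
      · exact (h1.symm.trans hRuv).trans h2.symm
      · exact (h2.trans hRuv.symm).trans h1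
    · have hcedges : ∀ e ∈ c.edges, e ∈ M.edgeSet := by
        intro e he
        have : e ∈ M'.edgeSet := c.edges_subset_edgeSet he
        rw [hES] at this
        rcases this with ⟨h1, -⟩ | h1
        · exact h1
        · exact absurd (h1 ▸ he) hec
      exact htree.IsAcyclic (c.transfer M hcedges) (hc.transfer hcedges)
  have htree' : IsSpanningTree G M' := ⟨hle', hconn, hacy⟩
  have hmin' := hmin M' htree'
  -- weight computation
  have hfinset : M'.edgeSet.toFinite.toFinset
      = insert s(u, v) ((M.edgeSet.toFinite.toFinset).erase s(a, b)) := by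
    ext z
    simp only [Set.Finite.mem_toFinset, hES, Set.mem_union, Set.mem_diff,
      Set.mem_singleton_iff, Finset.mem_insert, Finset.mem_erase,
      Set.Finite.mem_toFinset]
    tauto
  have hnotmem : s(u, v) ∉ (M.edgeSet.toFinite.toFinset).erase s(a, b) := by
    simp only [Finset.mem_erase, Set.Finite.mem_toFinset]
    exact fun h => heM h.2
  have hfmem : s(a, b) ∈ M.edgeSet.toFinite.toFinset := by
    rwa [Set.Finite.mem_toFinset]
  have hw' : totalWeight M' w = w s(u, v) +
      (totalWeight M w - w s(a, b)) := by
    unfold totalWeight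
    rw [hfinset, Finset.sum_insert hnotmem]
    congr 1
    have := Finset.add_sum_erase (M.edgeSet.toFinite.toFinset) w hfmem
    linarith
  rw [hw'] at hmin'
  linarith

/-- Lift a walk whose support lies in `S` to the induced subgraph. -/
private lemma induce_reachable' {V : Type*} {M : SimpleGraph V} {S : Set V} :
    ∀ {x y : V} (p : M.Walk x y) (hx : x ∈ S) (hy : y ∈ S),
      (∀ z ∈ p.support, z ∈ S) →
      (M.induce S).Reachable ⟨x, hx⟩ ⟨y, hy⟩ := by
  intro x y p
  induction p with
  | nil => intro hx hy _; rfl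
  | @cons u c v h q ih =>
    intro hx hy hsup
    have hc : c ∈ S := hsup c (by simp)
    have hadj : (M.induce S).Adj ⟨u, hx⟩ ⟨c, hc⟩ := by
      simp only [comap_adj, Function.Embedding.coe_subtype]
      exact h
    exact hadj.reachable.trans
      (ih hc hy (fun z hz => hsup z (by simp [Walk.support_cons, hz])))

end AuxMST

/-- every set of the laminar family induces a connected subgraph in every
MST of the graph. -/
theorem laminarFamily_induce_connected {V : Type*} [Finite V] (G : SimpleGraph V)
    (w : Sym2 V → ℝ) (hG : G.Connected) (M : SimpleGraph V) (hM : IsMST G w M)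
    (S : Set V) (hS : S ∈ laminarFamily G w) :
    (M.induce S).Connected := by
  classical
  have hMconn : M.Connected := hM.1.2.isConnected
  rcases Set.mem_insert_iff.mp hS with rfl | ⟨t, C, rfl⟩
  · -- S = univ
    refine (connected_iff _).mpr ⟨fun x y => ?_, ⟨⟨hMconn.nonempty.some, Set.mem_univ _⟩⟩⟩
    obtain ⟨p⟩ := hMconn.preconnected x.1 y.1
    have := induce_reachable' p (Set.mem_univ _) (Set.mem_univ _)
      (fun z _ => Set.mem_univ z)
    simpa using this
  · -- S = C.supp for a threshold component C
    -- key step: adjacent vertices of the threshold graph lying in C.supp are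
    -- connected inside the induced graph
    have step : ∀ {x y : V} (hadj : (thresholdGraph G w t).Adj x y)
        (hx : x ∈ C.supp) (hy : y ∈ C.supp),
        (M.induce C.supp).Reachable ⟨x, hx⟩ ⟨y, hy⟩ := by
      intro x y hadj hx hy
      obtain ⟨q0⟩ := hMconn.preconnected x y
      set p : M.Path x y := q0.toPath with hp
      have hedges : ∀ e ∈ p.val.edges, e ∈ (thresholdGraph G w t).edgeSet := by
        intro e he
        induction e using Sym2.ind with
        | _ a b =>
          have hMab : M.Adj a b := p.val.adj_of_mem_edges he
          have hGab : G.Adj a b := hM.1.1 hMab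
          have hwab : w s(a, b) ≤ w s(x, y) :=
            mst_path_edge_le hM (show G.Adj x y ∧ w s(x, y) ≤ t from hadj).1 p.val p.prop he
          exact show G.Adj a b ∧ w s(a, b) ≤ t from ⟨hGab, le_trans hwab (show G.Adj x y ∧ w s(x, y) ≤ t from hadj).2⟩
      set P := p.val.transfer (thresholdGraph G w t) hedges with hP
      have hsupp : ∀ z ∈ p.val.support, z ∈ C.supp := by
        intro z hz
        have hzP : z ∈ P.support := by
          rw [hP, Walk.support_transfer]; exact hz
        have hreach : (thresholdGraph G w t).Reachable x z := ⟨P.takeUntil z hzP⟩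
        rw [SimpleGraph.ConnectedComponent.mem_supp_iff] at hx ⊢
        rw [← hx]
        exact (SimpleGraph.ConnectedComponent.sound hreach).symm
      exact induce_reachable' p.val hx hy hsupp
    obtain ⟨v0, hv0⟩ := C.exists_rep
    have hv0m : v0 ∈ C.supp := hv0
    refine (connected_iff _).mpr ⟨?_, ⟨⟨v0, hv0m⟩⟩⟩
    rintro ⟨x, hx⟩ ⟨y, hy⟩
    have hreach : (thresholdGraph G w t).Reachable x y := by
      rw [SimpleGraph.ConnectedComponent.mem_supp_iff] at hx hy
      exact SimpleGraph.ConnectedComponent.exact (hx.trans hy.symm)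
    obtain ⟨W⟩ := hreach
    have main : ∀ {a b : V} (W : (thresholdGraph G w t).Walk a b)
        (ha : a ∈ C.supp) (hb : b ∈ C.supp),
        (M.induce C.supp).Reachable ⟨a, ha⟩ ⟨b, hb⟩ := by
      intro a b W
      induction W with
      | nil => intro ha hb; exact Reachable.refl _
      | @cons a c d hadj q ih =>
        intro ha hb
        have hc : c ∈ C.supp := by
          rw [SimpleGraph.ConnectedComponent.mem_supp_iff] at ha ⊢
          rw [← ha]
          exact (SimpleGraph.ConnectedComponent.sound hadj.reachable).symm
        exact (step hadj ha hc).trans (ih hc hb)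
    exact main W hx hy
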